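/- Let x1x2 be an edge in an edge-Δ-critical graph G with d(x1) < Δ and d(x2) < Δ, let z ∈ N(x1) \ {x2} and y ∈ N(x2) \ {x1, z}, and let φ ∈ C^Δ(G−x1x2) satisfy φ(x1z) ∈ φ̄(x2) and φ(x2y) ∈ φ̄(x1). Then the set {x1, x2, y, z} is elementary with respect to φ, i.e., the sets φ̄(x1), φ̄(x2), φ̄(y), φ̄(z) are pairwise disjoint. -/

import Mathlib

open SimpleGraph Finset
open scoped Classical

variable {V : Type*}

/-- A proper edge coloring of `G` using colors from `{1, …, k}`: every edge gets a color
in `{1, …, k}` and distinct edges sharing a vertex get different colors. -/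
def IsProperEdgeColoring (G : SimpleGraph V) (k : ℕ) (c : Sym2 V → ℕ) : Prop :=
  (∀ e ∈ G.edgeSet, c e ∈ Finset.Icc 1 k) ∧
  ∀ e ∈ G.edgeSet, ∀ f ∈ G.edgeSet, e ≠ f → (∃ v, v ∈ e ∧ v ∈ f) → c e ≠ c f

/-- The chromatic index of `G`: the least `k` such that `G` has a proper edge coloring
with `k` colors. -/
noncomputable def chromIndex (G : SimpleGraph V) : ℕ :=
  sInf {k | ∃ c, IsProperEdgeColoring G k c}

/-- `G` is edge-`Δ`-critical: `χ'(G) = Δ + 1` and every proper subgraph `H` satisfies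
`χ'(H) ≤ Δ`. -/
def IsEdgeCritical [Fintype V] (G : SimpleGraph V) : Prop :=
  chromIndex G = G.maxDegree + 1 ∧
  ∀ H : SimpleGraph V, H < G → chromIndex H ≤ G.maxDegree

/-- `σ_q(x, y)`: the number of neighbors of `y` other than `x` with degree at least `q`. -/
noncomputable def sigmaDeg [Fintype V] (G : SimpleGraph V) (q : ℝ) (x y : V) : ℕ :=
  (Finset.univ.filter fun z => G.Adj y z ∧ z ≠ x ∧ q ≤ (G.degree z : ℝ)).card

/-- `V_{≥ r}(G)`: the set of vertices of degree at least `r`. -/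
noncomputable def Vge [Fintype V] (G : SimpleGraph V) (r : ℝ) : Finset V :=
  Finset.univ.filter fun v => r ≤ (G.degree v : ℝ)

/-- The Bondy–Chvátal closure of `G`: the smallest supergraph of `G` in which any two
distinct nonadjacent vertices have degree sum less than `n`; equivalently, the graph
obtained from `G` by repeatedly joining nonadjacent pairs with degree sum at least `n`. -/
noncomputable def bcClosure [Fintype V] (G : SimpleGraph V) : SimpleGraph V :=
  sInf {H | G ≤ H ∧ ∀ u v : V, u ≠ v → ¬ H.Adj u v →
    H.degree u + H.degree v < Fintype.card V}

/-- The set of colors seen at `v`: colors appearing on edges of `G` incident with `v`. -/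
noncomputable def colorsAt [Fintype V] (G : SimpleGraph V) (c : Sym2 V → ℕ) (v : V) : Finset ℕ :=
  (Finset.univ.filter fun w => G.Adj v w).image fun w => c s(v, w)

/-- The set of colors of `{1, …, k}` missing at `v`. -/
noncomputable def missingAt [Fintype V] (G : SimpleGraph V) (k : ℕ) (c : Sym2 V → ℕ) (v : V) :
    Finset ℕ :=
  Finset.Icc 1 k \ colorsAt G c v

/-- A set `S` of vertices is elementary with respect to `c` if the sets of missing colors of
its members are pairwise disjoint. -/
def Elementary [Fintype V] (G : SimpleGraph V) (k : ℕ) (c : Sym2 V → ℕ) (S : Finset V) : Prop :=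
  (S : Set V).Pairwise fun u v => Disjoint (missingAt G k c u) (missingAt G k c v)

set_option linter.unusedSectionVars false
set_option linter.unusedVariables false
set_option maxHeartbeats 1000000

section Helpers
variable [Fintype V]

lemma mem_colorsAt {G0 : SimpleGraph V} {c : Sym2 V → ℕ} {v : V} {a : ℕ} :
    a ∈ colorsAt G0 c v ↔ ∃ w, G0.Adj v w ∧ c s(v, w) = a := by
  simp [colorsAt]

lemma mem_missingAt {G0 : SimpleGraph V} {k : ℕ} {c : Sym2 V → ℕ} {v : V} {a : ℕ} :
    a ∈ missingAt G0 k c v ↔ a ∈ Finset.Icc 1 k ∧ a ∉ colorsAt G0 c v := by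
  simp [missingAt]

lemma proper_ne {G0 : SimpleGraph V} {k : ℕ} {c : Sym2 V → ℕ}
    (hc : IsProperEdgeColoring G0 k c) {v w1 w2 : V}
    (h1 : G0.Adj v w1) (h2 : G0.Adj v w2) (hne : w1 ≠ w2) :
    c s(v, w1) ≠ c s(v, w2) := by
  apply hc.2 _ ((SimpleGraph.mem_edgeSet G0).mpr h1) _ ((SimpleGraph.mem_edgeSet G0).mpr h2)
  · intro h
    rcases Sym2.eq_iff.mp h with ⟨-, h'⟩ | ⟨rfl, rfl⟩
    · exact hne h'
    · exact hne rfl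
  · exact ⟨v, by simp, by simp⟩

lemma noCommonMissing (G : SimpleGraph V) (k : ℕ)
    (hnc : ∀ c', ¬ IsProperEdgeColoring G k c')
    {u v : V} (huv : G.Adj u v) {c : Sym2 V → ℕ}
    (hc : IsProperEdgeColoring (G.deleteEdges {s(u, v)}) k c) :
    Disjoint (missingAt (G.deleteEdges {s(u, v)}) k c u)
      (missingAt (G.deleteEdges {s(u, v)}) k c v) := by
  by_contra hdis
  obtain ⟨a, hau, hav⟩ := Finset.not_disjoint_iff.mp hdis
  apply hnc (Function.update c s(u, v) a)
  have hedge : ∀ e, e ∈ G.edgeSet → e ≠ s(u, v) → e ∈ (G.deleteEdges {s(u, v)}).edgeSet := by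
    intro e he hne
    rw [SimpleGraph.edgeSet_deleteEdges]
    exact ⟨he, by simpa using hne⟩
  have key : ∀ f, f ∈ G.edgeSet → f ≠ s(u, v) → (∃ x, x ∈ s(u, v) ∧ x ∈ f) → c f ≠ a := by
    rintro f hf hfne ⟨x, hx1, hx2⟩
    obtain ⟨w, rfl⟩ := Sym2.mem_iff_exists.mp hx2
    have hadj : (G.deleteEdges {s(u, v)}).Adj x w :=
      (SimpleGraph.mem_edgeSet _).mp (hedge _ hf hfne)
    intro hcf
    rcases Sym2.mem_iff.mp hx1 with rfl | rfl
    · exact (mem_missingAt.mp hau).2 (mem_colorsAt.mpr ⟨w, hadj, hcf⟩)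
    · exact (mem_missingAt.mp hav).2 (mem_colorsAt.mpr ⟨w, hadj, hcf⟩)
  constructor
  · intro e he
    by_cases h : e = s(u, v)
    · rw [h, Function.update_self]
      exact (mem_missingAt.mp hau).1
    · rw [Function.update_of_ne h]
      exact hc.1 e (hedge e he h)
  · intro e he f hf hef hshare
    by_cases h1 : e = s(u, v) <;> by_cases h2 : f = s(u, v)
    · exact absurd (h1.trans h2.symm) hef
    · rw [h1, Function.update_self, Function.update_of_ne h2]
      intro h
      obtain ⟨x, hx1, hx2⟩ := hshare
      exact key f hf h2 ⟨x, h1 ▸ hx1, hx2⟩ h.symm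
    · rw [h2, Function.update_self, Function.update_of_ne h1]
      apply key e he h1
      obtain ⟨x, hx1, hx2⟩ := hshare
      exact ⟨x, h2 ▸ hx2, hx1⟩
    · rw [Function.update_of_ne h1, Function.update_of_ne h2]
      exact hc.2 e (hedge e he h1) f (hedge f hf h2) hef hshare

lemma missingAt_card_ge (G : SimpleGraph V) (k : ℕ) {u v : V} (huv : G.Adj u v)
    (c : Sym2 V → ℕ) :
    k + 1 - G.degree u ≤ (missingAt (G.deleteEdges {s(u, v)}) k c u).card := by
  have hnb : (G.deleteEdges {s(u, v)}).neighborFinset u = G.neighborFinset u \ {v} := by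
    ext w
    simp only [SimpleGraph.mem_neighborFinset, SimpleGraph.deleteEdges_adj, Finset.mem_sdiff,
      Finset.mem_singleton, Set.mem_singleton_iff]
    constructor
    · rintro ⟨h1, h2⟩
      exact ⟨h1, fun hw => h2 (by rw [hw])⟩
    · rintro ⟨h1, h2⟩
      refine ⟨h1, fun hw => h2 ?_⟩
      rcases Sym2.eq_iff.mp hw with ⟨-, rfl⟩ | ⟨rfl, rfl⟩
      · rfl
      · rfl
  have hcardnb : ((Finset.univ.filter fun w => (G.deleteEdges {s(u, v)}).Adj u w)).card
      = G.degree u - 1 := by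
    have : (Finset.univ.filter fun w => (G.deleteEdges {s(u, v)}).Adj u w)
        = (G.deleteEdges {s(u, v)}).neighborFinset u := by
      rw [SimpleGraph.neighborFinset_eq_filter]
    rw [this, hnb, Finset.card_sdiff_of_subset (by simpa using huv)]
    rw [Finset.card_singleton, SimpleGraph.card_neighborFinset_eq_degree]
  have hcolors : (colorsAt (G.deleteEdges {s(u, v)}) c u).card ≤ G.degree u - 1 := by
    rw [← hcardnb]
    unfold colorsAt; convert Finset.card_image_le (β := ℕ)
  have hdeg1 : 1 ≤ G.degree u := by
    rw [Nat.one_le_iff_ne_zero, ← Nat.pos_iff_ne_zero, SimpleGraph.degree_pos_iff_exists_adj]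
    exact ⟨v, huv⟩
  have hsd : (Finset.Icc 1 k).card - (colorsAt (G.deleteEdges {s(u, v)}) c u).card
      ≤ (missingAt (G.deleteEdges {s(u, v)}) k c u).card := Finset.le_card_sdiff _ _
  rw [Nat.card_Icc] at hsd
  omega

end Helpers

def chainAdj [Fintype V] (G0 : SimpleGraph V) (c : Sym2 V → ℕ) (α β : ℕ) : SimpleGraph V where
  Adj a b := G0.Adj a b ∧ (c s(a, b) = α ∨ c s(a, b) = β)
  symm := by
    constructor
    rintro a b ⟨h1, h2⟩
    exact ⟨h1.symm, by rwa [Sym2.eq_swap]⟩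
  loopless := ⟨fun a h => G0.irrefl h.1⟩

section Chains
variable [Fintype V]

lemma chainAdj_comm {G0 : SimpleGraph V} {c : Sym2 V → ℕ} {α β : ℕ} :
    chainAdj G0 c α β = chainAdj G0 c β α := by
  ext a b
  show _ ∧ _ ↔ _ ∧ _
  tauto

lemma chain_pendant {G0 : SimpleGraph V} {k : ℕ} {c : Sym2 V → ℕ}
    (hc : IsProperEdgeColoring G0 k c) {α β a : ℕ} {v : V}
    (hm : a ∉ colorsAt G0 c v) (ha : a = α ∨ a = β) :
    ∀ w1 w2, (chainAdj G0 c α β).Adj v w1 → (chainAdj G0 c α β).Adj v w2 → w1 = w2 := by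
  rintro w1 w2 ⟨h1, hc1⟩ ⟨h2, hc2⟩
  by_contra hne
  have hne' := proper_ne hc h1 h2 hne
  have m1 : c s(v, w1) ≠ a := fun h => hm (mem_colorsAt.mpr ⟨w1, h1, h⟩)
  have m2 : c s(v, w2) ≠ a := fun h => hm (mem_colorsAt.mpr ⟨w2, h2, h⟩)
  rcases ha with rfl | rfl <;> rcases hc1 with h | h <;> rcases hc2 with h' | h' <;>
    simp_all

lemma chain_deg2 {G0 : SimpleGraph V} {k : ℕ} {c : Sym2 V → ℕ}
    (hc : IsProperEdgeColoring G0 k c) {α β : ℕ} :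
    ∀ v w1 w2 w3, (chainAdj G0 c α β).Adj v w1 → (chainAdj G0 c α β).Adj v w2 →
      (chainAdj G0 c α β).Adj v w3 → w1 = w2 ∨ w1 = w3 ∨ w2 = w3 := by
  rintro v w1 w2 w3 ⟨h1, hc1⟩ ⟨h2, hc2⟩ ⟨h3, hc3⟩
  by_contra hne
  push_neg at hne
  obtain ⟨n12, n13, n23⟩ := hne
  have d12 := proper_ne hc h1 h2 n12
  have d13 := proper_ne hc h1 h3 n13
  have d23 := proper_ne hc h2 h3 n23
  rcases hc1 with h | h <;> rcases hc2 with h' | h' <;> rcases hc3 with h'' | h'' <;>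
    simp_all

lemma first_step {H : SimpleGraph V} {x c : V} (p : H.Walk x c) (hxc : x ≠ c) :
    ∃ t, H.Adj x t ∧ t ∈ p.support := by
  cases p with
  | nil => exact absurd rfl hxc
  | cons h p =>
    refine ⟨_, h, ?_⟩
    rw [SimpleGraph.Walk.support_cons]
    exact List.mem_cons_of_mem _ p.start_mem_support

lemma internal_two {H : SimpleGraph V} {b c : V} (q : H.Walk b c) :
    ∀ x, q.IsPath → x ∈ q.support → x ≠ b → x ≠ c →
    ∃ s t, s ≠ t ∧ H.Adj x s ∧ H.Adj x t ∧ s ∈ q.support ∧ t ∈ q.support := by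
  induction q with
  | nil =>
    intro x _ hx hxb _
    rw [SimpleGraph.Walk.support_nil, List.mem_singleton] at hx
    exact absurd hx hxb
  | @cons b b1 c h p ih =>
    intro x hq hx hxb hxc
    rw [SimpleGraph.Walk.support_cons, List.mem_cons] at hx
    rcases hx with rfl | hx
    · exact absurd rfl hxb
    have hbp : b ∉ p.support := ((SimpleGraph.Walk.cons_isPath_iff h p).mp hq).2
    by_cases hxb1 : x = b1
    · subst hxb1
      obtain ⟨t, hadjt, ht⟩ := first_step p hxc
      refine ⟨b, t, ?_, h.symm, hadjt, by simp [SimpleGraph.Walk.support_cons],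
        by rw [SimpleGraph.Walk.support_cons]; exact List.mem_cons_of_mem _ ht⟩
      rintro rfl
      exact hbp ht
    · obtain ⟨s, t, hst, has, hat, hs, ht⟩ :=
        ih x ((SimpleGraph.Walk.cons_isPath_iff h p).mp hq).1 hx hxb1 hxc
      exact ⟨s, t, hst, has, hat,
        by rw [SimpleGraph.Walk.support_cons]; exact List.mem_cons_of_mem _ hs,
        by rw [SimpleGraph.Walk.support_cons]; exact List.mem_cons_of_mem _ ht⟩

lemma endpoint_closure {H : SimpleGraph V} {b c y : V} (q : H.Walk b c) (hbc : b ≠ c)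
    (pb : ∀ w1 w2, H.Adj b w1 → H.Adj b w2 → w1 = w2) (hy : H.Adj b y) : y ∈ q.support := by
  cases q with
  | nil => exact absurd rfl hbc
  | cons h p =>
    rw [SimpleGraph.Walk.support_cons]
    apply List.mem_cons_of_mem
    rw [pb y _ hy h]
    exact p.start_mem_support

lemma support_closed {H : SimpleGraph V} {b c : V} (q : H.Walk b c) (hq : q.IsPath)
    (hbc : b ≠ c)
    (hdeg : ∀ v w1 w2 w3, H.Adj v w1 → H.Adj v w2 → H.Adj v w3 →
      w1 = w2 ∨ w1 = w3 ∨ w2 = w3)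
    (pb : ∀ w1 w2, H.Adj b w1 → H.Adj b w2 → w1 = w2)
    (pc : ∀ w1 w2, H.Adj c w1 → H.Adj c w2 → w1 = w2) :
    ∀ x ∈ q.support, ∀ y, H.Adj x y → y ∈ q.support := by
  intro x hx y hxy
  by_cases hxb : x = b
  · subst hxb
    exact endpoint_closure q hbc pb hxy
  by_cases hxc : x = c
  · subst hxc
    have := endpoint_closure q.reverse (Ne.symm hbc) pc hxy
    rwa [SimpleGraph.Walk.support_reverse, List.mem_reverse] at this
  obtain ⟨s, t, hst, has, hat, hs, ht⟩ := internal_two q x hq hx hxb hxc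
  rcases hdeg x y s t hxy has hat with rfl | rfl | h
  · exact hs
  · exact ht
  · exact absurd h hst

lemma reach_mem {H : SimpleGraph V} {b c : V} (q : H.Walk b c)
    (hclosed : ∀ x ∈ q.support, ∀ y, H.Adj x y → y ∈ q.support) :
    ∀ {d e : V} (w : H.Walk d e), d ∈ q.support → e ∈ q.support := by
  intro d e w
  induction w with
  | nil => exact id
  | cons h p ih => exact fun hd => ih (hclosed _ hd _ h)

lemma three_pendant {H : SimpleGraph V}
    (hdeg : ∀ v w1 w2 w3, H.Adj v w1 → H.Adj v w2 → H.Adj v w3 →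
      w1 = w2 ∨ w1 = w3 ∨ w2 = w3)
    {a b c : V} (hab : a ≠ b) (hac : a ≠ c) (hbc : b ≠ c)
    (pa : ∀ w1 w2, H.Adj a w1 → H.Adj a w2 → w1 = w2)
    (pb : ∀ w1 w2, H.Adj b w1 → H.Adj b w2 → w1 = w2)
    (pc : ∀ w1 w2, H.Adj c w1 → H.Adj c w2 → w1 = w2)
    (rab : H.Reachable a b) (rac : H.Reachable a c) : False := by
  obtain ⟨w⟩ := rab.symm.trans rac
  have hq : w.bypass.IsPath := w.bypass_isPath
  have hclosed := support_closed w.bypass hq hbc hdeg pb pc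
  have ha : a ∈ w.bypass.support := by
    obtain ⟨w2⟩ := rab.symm
    exact reach_mem w.bypass hclosed w2 w.bypass.start_mem_support
  obtain ⟨s, t, hst, has, hat, -, -⟩ :=
    internal_two w.bypass a hq ha hab hac
  exact hst (pa s t has hat)

end Chains

noncomputable def swapColor [Fintype V] (G0 : SimpleGraph V) (c : Sym2 V → ℕ) (α β : ℕ)
    (u : V) : Sym2 V → ℕ := fun e =>
  if (∃ x ∈ e, (chainAdj G0 c α β).Reachable u x) ∧ e ∈ (chainAdj G0 c α β).edgeSet then
    (if c e = α then β else α) else c e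

section Swap
variable [Fintype V]

lemma swap_eq {G0 : SimpleGraph V} {c : Sym2 V → ℕ} {α β : ℕ} {u v w : V}
    (hvw : G0.Adj v w) :
    swapColor G0 c α β u s(v, w) =
      if (c s(v, w) = α ∨ c s(v, w) = β) ∧ (chainAdj G0 c α β).Reachable u v then
        (if c s(v, w) = α then β else α) else c s(v, w) := by
  unfold swapColor
  by_cases hcol : c s(v, w) = α ∨ c s(v, w) = β
  · have hH : (chainAdj G0 c α β).Adj v w := ⟨hvw, hcol⟩
    have hedge : s(v, w) ∈ (chainAdj G0 c α β).edgeSet := (SimpleGraph.mem_edgeSet _).mpr hH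
    by_cases hr : (chainAdj G0 c α β).Reachable u v
    · have hcond : (∃ x ∈ s(v, w), (chainAdj G0 c α β).Reachable u x) ∧
          s(v, w) ∈ (chainAdj G0 c α β).edgeSet := ⟨⟨v, by simp, hr⟩, hedge⟩
      have hcond2 : (c s(v, w) = α ∨ c s(v, w) = β) ∧ (chainAdj G0 c α β).Reachable u v :=
        ⟨hcol, hr⟩
      rw [if_pos hcond, if_pos hcond2]
    · have hn2 : ¬((c s(v, w) = α ∨ c s(v, w) = β) ∧ (chainAdj G0 c α β).Reachable u v) :=
        fun h => hr h.2
      have hn1 : ¬((∃ x ∈ s(v, w), (chainAdj G0 c α β).Reachable u x) ∧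
          s(v, w) ∈ (chainAdj G0 c α β).edgeSet) := by
        rintro ⟨⟨x, hx, hrx⟩, -⟩
        rcases Sym2.mem_iff.mp hx with rfl | rfl
        · exact hr hrx
        · exact hr (hrx.trans hH.symm.reachable)
      rw [if_neg hn1, if_neg hn2]
  · have hn2 : ¬((c s(v, w) = α ∨ c s(v, w) = β) ∧ (chainAdj G0 c α β).Reachable u v) :=
      fun h => hcol h.1
    have hn1 : ¬((∃ x ∈ s(v, w), (chainAdj G0 c α β).Reachable u x) ∧
        s(v, w) ∈ (chainAdj G0 c α β).edgeSet) := by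
      rintro ⟨-, hedge⟩
      exact hcol ((SimpleGraph.mem_edgeSet _).mp hedge).2
    rw [if_neg hn1, if_neg hn2]

lemma swap_proper {G0 : SimpleGraph V} {k : ℕ} {c : Sym2 V → ℕ}
    (hc : IsProperEdgeColoring G0 k c) {α β : ℕ}
    (hα : α ∈ Finset.Icc 1 k) (hβ : β ∈ Finset.Icc 1 k) (hαβ : α ≠ β) (u : V) :
    IsProperEdgeColoring G0 k (swapColor G0 c α β u) := by
  constructor
  · intro e he
    induction e using Sym2.ind with
    | _ v w =>
      have hadj : G0.Adj v w := (SimpleGraph.mem_edgeSet _).mp he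
      rw [swap_eq hadj]
      split_ifs <;> first | exact hβ | exact hα | exact hc.1 _ he
  · intro e he f hf hef hshare
    obtain ⟨x, hxe, hxf⟩ := hshare
    obtain ⟨w1, rfl⟩ := Sym2.mem_iff_exists.mp hxe
    obtain ⟨w2, rfl⟩ := Sym2.mem_iff_exists.mp hxf
    have h1 : G0.Adj x w1 := (SimpleGraph.mem_edgeSet _).mp he
    have h2 : G0.Adj x w2 := (SimpleGraph.mem_edgeSet _).mp hf
    have hw : w1 ≠ w2 := fun h => hef (by rw [h])
    have hcc := proper_ne hc h1 h2 hw
    have hβα : β ≠ α := hαβ.symm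
    rw [swap_eq h1, swap_eq h2]
    by_cases hr : (chainAdj G0 c α β).Reachable u x
    · by_cases m1 : c s(x, w1) = α ∨ c s(x, w1) = β <;>
        by_cases m2 : c s(x, w2) = α ∨ c s(x, w2) = β
      · have hc1 : (c s(x, w1) = α ∨ c s(x, w1) = β) ∧ (chainAdj G0 c α β).Reachable u x :=
          ⟨m1, hr⟩
        have hc2 : (c s(x, w2) = α ∨ c s(x, w2) = β) ∧ (chainAdj G0 c α β).Reachable u x :=
          ⟨m2, hr⟩
        rw [if_pos hc1, if_pos hc2]
        rcases m1 with e1 | e1 <;> rcases m2 with e2 | e2 <;> rw [e1, e2] at hcc ⊢ <;>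
          simp_all
      · have hc1 : (c s(x, w1) = α ∨ c s(x, w1) = β) ∧ (chainAdj G0 c α β).Reachable u x :=
          ⟨m1, hr⟩
        have hn2 : ¬((c s(x, w2) = α ∨ c s(x, w2) = β) ∧ (chainAdj G0 c α β).Reachable u x) :=
          fun h => m2 h.1
        rw [if_pos hc1, if_neg hn2]
        push_neg at m2
        split_ifs
        · exact fun h => m2.2 h.symm
        · exact fun h => m2.1 h.symm
      · have hn1 : ¬((c s(x, w1) = α ∨ c s(x, w1) = β) ∧ (chainAdj G0 c α β).Reachable u x) :=
          fun h => m1 h.1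
        have hc2 : (c s(x, w2) = α ∨ c s(x, w2) = β) ∧ (chainAdj G0 c α β).Reachable u x :=
          ⟨m2, hr⟩
        rw [if_neg hn1, if_pos hc2]
        push_neg at m1
        split_ifs
        · exact m1.2
        · exact m1.1
      · have hn1 : ¬((c s(x, w1) = α ∨ c s(x, w1) = β) ∧ (chainAdj G0 c α β).Reachable u x) :=
          fun h => m1 h.1
        have hn2 : ¬((c s(x, w2) = α ∨ c s(x, w2) = β) ∧ (chainAdj G0 c α β).Reachable u x) :=
          fun h => m2 h.1
        rw [if_neg hn1, if_neg hn2]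
        exact hcc
    · have hn1 : ¬((c s(x, w1) = α ∨ c s(x, w1) = β) ∧ (chainAdj G0 c α β).Reachable u x) :=
        fun h => hr h.2
      have hn2 : ¬((c s(x, w2) = α ∨ c s(x, w2) = β) ∧ (chainAdj G0 c α β).Reachable u x) :=
        fun h => hr h.2
      rw [if_neg hn1, if_neg hn2]
      exact hcc

lemma swap_colorsAt_of_not_reach {G0 : SimpleGraph V} {c : Sym2 V → ℕ} {α β : ℕ} {u v : V}
    (hnr : ¬ (chainAdj G0 c α β).Reachable u v) :
    colorsAt G0 (swapColor G0 c α β u) v = colorsAt G0 c v := by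
  unfold colorsAt
  apply Finset.image_congr
  intro w hw
  rw [Finset.coe_filter] at hw
  show swapColor G0 c α β u s(v, w) = c s(v, w)
  have hn : ¬((c s(v, w) = α ∨ c s(v, w) = β) ∧ (chainAdj G0 c α β).Reachable u v) :=
    fun h => hnr h.2
  rw [swap_eq hw.2, if_neg hn]

lemma swap_colorsAt_of_ne {G0 : SimpleGraph V} {c : Sym2 V → ℕ} {α β a : ℕ} {u v : V}
    (ha : a ≠ α) (hb : a ≠ β) :
    (a ∈ colorsAt G0 (swapColor G0 c α β u) v ↔ a ∈ colorsAt G0 c v) := by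
  rw [mem_colorsAt, mem_colorsAt]
  constructor
  · rintro ⟨w, hw, hval⟩
    rw [swap_eq hw] at hval
    split_ifs at hval with h1 h2
    · exact absurd hval hb.symm
    · exact absurd hval ha.symm
    · exact ⟨w, hw, hval⟩
  · rintro ⟨w, hw, hval⟩
    refine ⟨w, hw, ?_⟩
    have hn : ¬((c s(v, w) = α ∨ c s(v, w) = β) ∧ (chainAdj G0 c α β).Reachable u v) := by
      rintro ⟨h1 | h1, -⟩
      · exact ha (hval.symm.trans h1)
      · exact hb (hval.symm.trans h1)
    rw [swap_eq hw, if_neg hn]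
    exact hval

lemma swap_colorsAt_beta {G0 : SimpleGraph V} {c : Sym2 V → ℕ} {α β : ℕ} {u v : V}
    (hαβ : α ≠ β) (hr : (chainAdj G0 c α β).Reachable u v) :
    (β ∈ colorsAt G0 (swapColor G0 c α β u) v ↔ α ∈ colorsAt G0 c v) := by
  rw [mem_colorsAt, mem_colorsAt]
  constructor
  · rintro ⟨w, hw, hval⟩
    rw [swap_eq hw] at hval
    split_ifs at hval with h1 h2
    · exact ⟨w, hw, h2⟩
    · rcases h1.1 with h | h
      · exact absurd h h2
      · exact absurd hval.symm hαβ.symm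
    · rcases not_and_or.mp h1 with h | h
      · exact absurd (Or.inr hval) h
      · exact absurd hr h
  · rintro ⟨w, hw, hval⟩
    refine ⟨w, hw, ?_⟩
    have hcnd : (c s(v, w) = α ∨ c s(v, w) = β) ∧ (chainAdj G0 c α β).Reachable u v :=
      ⟨Or.inl hval, hr⟩
    rw [swap_eq hw, if_pos hcnd, if_pos hval]

lemma factB (G : SimpleGraph V) (k : ℕ)
    (hnc : ∀ c', ¬ IsProperEdgeColoring G k c')
    {u v : V} (huv : G.Adj u v) {c : Sym2 V → ℕ}
    (hc : IsProperEdgeColoring (G.deleteEdges {s(u, v)}) k c)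
    {α β : ℕ} (hα : α ∈ missingAt (G.deleteEdges {s(u, v)}) k c u)
    (hβ : β ∈ missingAt (G.deleteEdges {s(u, v)}) k c v) :
    (chainAdj (G.deleteEdges {s(u, v)}) c α β).Reachable u v := by
  have hd := noCommonMissing G k hnc huv hc
  have hαβ : α ≠ β := by
    rintro rfl
    exact Finset.disjoint_left.mp hd hα hβ
  by_contra hnr
  have hsw := swap_proper hc (mem_missingAt.mp hα).1 (mem_missingAt.mp hβ).1 hαβ u
  have hd2 := noCommonMissing G k hnc huv hsw
  have hβu : β ∈ missingAt (G.deleteEdges {s(u, v)}) k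
      (swapColor (G.deleteEdges {s(u, v)}) c α β u) u := by
    rw [mem_missingAt]
    refine ⟨(mem_missingAt.mp hβ).1, fun hmem => ?_⟩
    exact (mem_missingAt.mp hα).2
      ((swap_colorsAt_beta hαβ (SimpleGraph.Reachable.refl u)).mp hmem)
  have hβv : β ∈ missingAt (G.deleteEdges {s(u, v)}) k
      (swapColor (G.deleteEdges {s(u, v)}) c α β u) v := by
    rw [mem_missingAt]
    refine ⟨(mem_missingAt.mp hβ).1, ?_⟩
    rw [swap_colorsAt_of_not_reach hnr]
    exact (mem_missingAt.mp hβ).2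
  exact Finset.disjoint_left.mp hd2 hβu hβv

end Swap

section Shift
variable [Fintype V]

lemma sym2_ne {u x v : V} (hxv : x ≠ v) (huv : u ≠ v) : s(u, x) ≠ s(u, v) := by
  intro h
  rcases Sym2.eq_iff.mp h with ⟨-, h2⟩ | ⟨rfl, rfl⟩
  · exact hxv h2
  · exact huv rfl

lemma shift_proper (G : SimpleGraph V) (k : ℕ) {u v w : V}
    (huv : G.Adj u v) (huw : G.Adj u w) (hwv : w ≠ v) {c : Sym2 V → ℕ}
    (hc : IsProperEdgeColoring (G.deleteEdges {s(u, v)}) k c)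
    (hμ : c s(u, w) ∈ missingAt (G.deleteEdges {s(u, v)}) k c v) :
    IsProperEdgeColoring (G.deleteEdges {s(u, w)}) k (Function.update c s(u, v) (c s(u, w))) := by
  have hne : s(u, v) ≠ s(u, w) := sym2_ne hwv huv.ne |>.symm
  have hadjuw : (G.deleteEdges {s(u, v)}).Adj u w := by
    rw [SimpleGraph.deleteEdges_adj]
    exact ⟨huw, by simpa using hne.symm⟩
  have hedge : ∀ e, e ∈ (G.deleteEdges {s(u, w)}).edgeSet → e ≠ s(u, v) →
      e ∈ (G.deleteEdges {s(u, v)}).edgeSet := by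
    intro e he hne'
    rw [SimpleGraph.edgeSet_deleteEdges] at he ⊢
    exact ⟨he.1, by simpa using hne'⟩
  have key : ∀ f, f ∈ (G.deleteEdges {s(u, w)}).edgeSet → f ≠ s(u, v) →
      (∃ x, x ∈ s(u, v) ∧ x ∈ f) → c f ≠ c s(u, w) := by
    rintro f hf hfne ⟨x, hx1, hx2⟩
    obtain ⟨w2, rfl⟩ := Sym2.mem_iff_exists.mp hx2
    have hfuv : (G.deleteEdges {s(u, v)}).Adj x w2 :=
      (SimpleGraph.mem_edgeSet _).mp (hedge _ hf hfne)
    rcases Sym2.mem_iff.mp hx1 with rfl | rfl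
    · have hw2 : w2 ≠ w := by
        rintro rfl
        rw [SimpleGraph.edgeSet_deleteEdges] at hf
        exact hf.2 rfl
      exact proper_ne hc hfuv hadjuw hw2
    · intro hcf
      exact (mem_missingAt.mp hμ).2 (mem_colorsAt.mpr ⟨w2, hfuv, hcf⟩)
  constructor
  · intro e he
    by_cases h : e = s(u, v)
    · rw [h, Function.update_self]
      exact hc.1 _ ((SimpleGraph.mem_edgeSet _).mpr hadjuw)
    · rw [Function.update_of_ne h]
      exact hc.1 e (hedge e he h)
  · intro e he f hf hef hshare
    by_cases h1 : e = s(u, v) <;> by_cases h2 : f = s(u, v)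
    · exact absurd (h1.trans h2.symm) hef
    · rw [h1, Function.update_self, Function.update_of_ne h2]
      intro h
      obtain ⟨x, hx1, hx2⟩ := hshare
      exact key f hf h2 ⟨x, h1 ▸ hx1, hx2⟩ h.symm
    · rw [h2, Function.update_self, Function.update_of_ne h1]
      apply key e he h1
      obtain ⟨x, hx1, hx2⟩ := hshare
      exact ⟨x, h2 ▸ hx2, hx1⟩
    · rw [Function.update_of_ne h1, Function.update_of_ne h2]
      exact hc.2 e (hedge e he h1) f (hedge f hf h2) hef hshare

lemma shift_missing_u (G : SimpleGraph V) (k : ℕ) {u v w : V}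
    (huv : G.Adj u v) (huw : G.Adj u w) (hwv : w ≠ v) {c : Sym2 V → ℕ} :
    missingAt (G.deleteEdges {s(u, v)}) k c u ⊆
      missingAt (G.deleteEdges {s(u, w)}) k (Function.update c s(u, v) (c s(u, w))) u := by
  intro a ha
  rw [mem_missingAt] at ha ⊢
  refine ⟨ha.1, fun hmem => ?_⟩
  obtain ⟨x, hadj, hval⟩ := mem_colorsAt.mp hmem
  have hadjuw : (G.deleteEdges {s(u, v)}).Adj u w := by
    rw [SimpleGraph.deleteEdges_adj]
    exact ⟨huw, by simpa using sym2_ne hwv huv.ne⟩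
  by_cases hxv : x = v
  · subst hxv
    rw [Function.update_self] at hval
    exact ha.2 (mem_colorsAt.mpr ⟨w, hadjuw, hval⟩)
  · rw [Function.update_of_ne (sym2_ne hxv huv.ne)] at hval
    have hadj' : (G.deleteEdges {s(u, v)}).Adj u x := by
      rw [SimpleGraph.deleteEdges_adj] at hadj ⊢
      exact ⟨hadj.1, by simpa using sym2_ne hxv huv.ne⟩
    exact ha.2 (mem_colorsAt.mpr ⟨x, hadj', hval⟩)

lemma shift_missing_w (G : SimpleGraph V) (k : ℕ) {u v w : V}
    (huv : G.Adj u v) (huw : G.Adj u w) (hwv : w ≠ v) {c : Sym2 V → ℕ} :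
    missingAt (G.deleteEdges {s(u, v)}) k c w ⊆
      missingAt (G.deleteEdges {s(u, w)}) k (Function.update c s(u, v) (c s(u, w))) w := by
  intro a ha
  rw [mem_missingAt] at ha ⊢
  refine ⟨ha.1, fun hmem => ?_⟩
  obtain ⟨x, hadj, hval⟩ := mem_colorsAt.mp hmem
  have h1 : s(w, x) ≠ s(u, v) := by
    intro h
    rcases Sym2.eq_iff.mp h with ⟨h3, -⟩ | ⟨h3, -⟩
    · exact huw.ne' h3
    · exact hwv h3
  rw [Function.update_of_ne h1] at hval
  have hadj' : (G.deleteEdges {s(u, v)}).Adj w x := by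
    rw [SimpleGraph.deleteEdges_adj] at hadj ⊢
    exact ⟨hadj.1, by simpa using h1⟩
  exact ha.2 (mem_colorsAt.mpr ⟨x, hadj', hval⟩)

lemma chainAdj_shift_eq (G : SimpleGraph V) {u v w : V} (huv : G.Adj u v) (huw : G.Adj u w)
    (hwv : w ≠ v) {c : Sym2 V → ℕ} {α β : ℕ}
    (hμα : c s(u, w) ≠ α) (hμβ : c s(u, w) ≠ β) :
    chainAdj (G.deleteEdges {s(u, w)}) (Function.update c s(u, v) (c s(u, w))) α β
      = chainAdj (G.deleteEdges {s(u, v)}) c α β := by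
  ext a b
  show (G.deleteEdges {s(u, w)}).Adj a b ∧ _ ↔ (G.deleteEdges {s(u, v)}).Adj a b ∧ _
  rw [SimpleGraph.deleteEdges_adj, SimpleGraph.deleteEdges_adj]
  simp only [Set.mem_singleton_iff]
  by_cases h1 : s(a, b) = s(u, v)
  · constructor
    · rintro ⟨-, hcol⟩
      rw [h1, Function.update_self] at hcol
      rcases hcol with h | h
      · exact absurd h hμα
      · exact absurd h hμβ
    · rintro ⟨⟨-, hne⟩, -⟩
      exact absurd h1 hne
  · by_cases h2 : s(a, b) = s(u, w)
    · constructor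
      · rintro ⟨⟨-, hne⟩, -⟩
        exact absurd h2 hne
      · rintro ⟨-, hcol⟩
        rw [h2] at hcol
        rcases hcol with h | h
        · exact absurd h hμα
        · exact absurd h hμβ
    · rw [Function.update_of_ne h1]
      constructor
      · rintro ⟨⟨hadj, -⟩, hcol⟩
        exact ⟨⟨hadj, h1⟩, hcol⟩
      · rintro ⟨⟨hadj, -⟩, hcol⟩
        exact ⟨⟨hadj, h2⟩, hcol⟩

end Shift

section MainLemmas
variable [Fintype V]

lemma lemA (G : SimpleGraph V) (k : ℕ) (hnc : ∀ c', ¬ IsProperEdgeColoring G k c')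
    {x1 x2 y : V} (h12 : G.Adj x1 x2) (hy : G.Adj x2 y) (hy1 : y ≠ x1)
    {c : Sym2 V → ℕ}
    (hc : IsProperEdgeColoring (G.deleteEdges {s(x1, x2)}) k c)
    (hτ : c s(x2, y) ∈ missingAt (G.deleteEdges {s(x1, x2)}) k c x1)
    (hx2ne : (missingAt (G.deleteEdges {s(x1, x2)}) k c x2).Nonempty)
    {δ : ℕ} (hδ1 : δ ∈ missingAt (G.deleteEdges {s(x1, x2)}) k c x1)
    (hδy : δ ∈ missingAt (G.deleteEdges {s(x1, x2)}) k c y) : False := by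
  obtain ⟨β, hβ⟩ := hx2ne
  have hswap : s(x2, x1) = s(x1, x2) := Sym2.eq_swap
  have had2y : (G.deleteEdges {s(x1, x2)}).Adj x2 y := by
    rw [SimpleGraph.deleteEdges_adj]
    refine ⟨hy, ?_⟩
    simp only [Set.mem_singleton_iff]
    intro h
    rcases Sym2.eq_iff.mp h with ⟨h3, -⟩ | ⟨-, h4⟩
    · exact h12.ne h3.symm
    · exact hy1 h4
  have hτ2 : c s(x2, y) ∈ colorsAt (G.deleteEdges {s(x1, x2)}) c x2 :=
    mem_colorsAt.mpr ⟨y, had2y, rfl⟩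
  have hτy : c s(x2, y) ∈ colorsAt (G.deleteEdges {s(x1, x2)}) c y := by
    refine mem_colorsAt.mpr ⟨x2, had2y.symm, ?_⟩
    rw [Sym2.eq_swap]
  have hτβ : c s(x2, y) ≠ β := fun h => (mem_missingAt.mp hβ).2 (h ▸ hτ2)
  have hτδ : c s(x2, y) ≠ δ := fun h => (mem_missingAt.mp hδy).2 (h ▸ hτy)
  have r1 : (chainAdj (G.deleteEdges {s(x1, x2)}) c δ β).Reachable x1 x2 :=
    factB G k hnc h12 hc hδ1 hβ
  have hc' : IsProperEdgeColoring (G.deleteEdges {s(x2, x1)}) k c := by rw [hswap]; exact hc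
  have hτ' : c s(x2, y) ∈ missingAt (G.deleteEdges {s(x2, x1)}) k c x1 := by
    rw [hswap]; exact hτ
  have hψ := shift_proper G k h12.symm hy hy1 hc' hτ'
  have hβ' : β ∈ missingAt (G.deleteEdges {s(x2, x1)}) k c x2 := by rw [hswap]; exact hβ
  have hδy' : δ ∈ missingAt (G.deleteEdges {s(x2, x1)}) k c y := by rw [hswap]; exact hδy
  have r2 := factB G k hnc hy hψ (shift_missing_u G k h12.symm hy hy1 hβ')
    (shift_missing_w G k h12.symm hy hy1 hδy')
  rw [chainAdj_shift_eq G h12.symm hy hy1 hτβ hτδ, hswap, chainAdj_comm] at r2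
  exact three_pendant (chain_deg2 hc) h12.ne' hy.ne (Ne.symm hy1)
    (chain_pendant hc (mem_missingAt.mp hβ).2 (Or.inr rfl))
    (chain_pendant hc (mem_missingAt.mp hδ1).2 (Or.inl rfl))
    (chain_pendant hc (mem_missingAt.mp hδy).2 (Or.inl rfl))
    r1.symm r2

end MainLemmas

/-- If `x1x2` is an edge of an edge-`Δ`-critical graph `G` with `d(x1) < Δ` and `d(x2) < Δ`,
`z ∈ N(x1) \ {x2}`, `y ∈ N(x2) \ {x1, z}`, and `φ` is a proper edge-`Δ`-coloring of
`G - x1x2` with `φ(x1z) ∈ φ̄(x2)` and `φ(x2y) ∈ φ̄(x1)`, then `{x1, x2, y, z}` is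
elementary with respect to `φ`. -/
theorem statement11 [Fintype V] (G : SimpleGraph V) (hG : IsEdgeCritical G)
    (x1 x2 z y : V) (h12 : G.Adj x1 x2)
    (hd1 : G.degree x1 < G.maxDegree) (hd2 : G.degree x2 < G.maxDegree)
    (hz : G.Adj x1 z) (hz2 : z ≠ x2)
    (hy : G.Adj x2 y) (hy1 : y ≠ x1) (hyz : y ≠ z)
    (c : Sym2 V → ℕ)
    (hc : IsProperEdgeColoring (G.deleteEdges {s(x1, x2)}) G.maxDegree c)
    (hf1 : c s(x1, z) ∈ missingAt (G.deleteEdges {s(x1, x2)}) G.maxDegree c x2)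
    (hf2 : c s(x2, y) ∈ missingAt (G.deleteEdges {s(x1, x2)}) G.maxDegree c x1) :
    Elementary (G.deleteEdges {s(x1, x2)}) G.maxDegree c {x1, x2, y, z} := by
  have hnc : ∀ c', ¬ IsProperEdgeColoring G G.maxDegree c' := by
    intro c' hcp
    have h1 : chromIndex G ≤ G.maxDegree := Nat.sInf_le ⟨c', hcp⟩
    rw [hG.1] at h1
    omega
  have hswap : s(x2, x1) = s(x1, x2) := Sym2.eq_swap
  -- adjacency facts in G - x1x2
  have had1z : (G.deleteEdges {s(x1, x2)}).Adj x1 z := by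
    rw [SimpleGraph.deleteEdges_adj]
    exact ⟨hz, by simpa using sym2_ne hz2 h12.ne⟩
  have had2y : (G.deleteEdges {s(x1, x2)}).Adj x2 y := by
    rw [SimpleGraph.deleteEdges_adj]
    refine ⟨hy, ?_⟩
    simp only [Set.mem_singleton_iff]
    intro h
    rcases Sym2.eq_iff.mp h with ⟨h3, -⟩ | ⟨-, h4⟩
    · exact h12.ne h3.symm
    · exact hy1 h4
  -- colors present
  have hγ1 : c s(x1, z) ∈ colorsAt (G.deleteEdges {s(x1, x2)}) c x1 :=
    mem_colorsAt.mpr ⟨z, had1z, rfl⟩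
  have hγz : c s(x1, z) ∈ colorsAt (G.deleteEdges {s(x1, x2)}) c z := by
    refine mem_colorsAt.mpr ⟨x1, had1z.symm, ?_⟩
    rw [Sym2.eq_swap]
  have hτ2 : c s(x2, y) ∈ colorsAt (G.deleteEdges {s(x1, x2)}) c x2 :=
    mem_colorsAt.mpr ⟨y, had2y, rfl⟩
  have hτy : c s(x2, y) ∈ colorsAt (G.deleteEdges {s(x1, x2)}) c y := by
    refine mem_colorsAt.mpr ⟨x2, had2y.symm, ?_⟩
    rw [Sym2.eq_swap]
  -- nonemptiness / size of missing sets
  have hM1card := missingAt_card_ge G G.maxDegree h12 c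
  have hM1two : 2 ≤ (missingAt (G.deleteEdges {s(x1, x2)}) G.maxDegree c x1).card := by omega
  have hM2ne : (missingAt (G.deleteEdges {s(x1, x2)}) G.maxDegree c x2).Nonempty := by
    have h := missingAt_card_ge G G.maxDegree h12.symm c
    rw [hswap] at h
    rw [← Finset.card_pos]
    omega
  have hM1ne : (missingAt (G.deleteEdges {s(x1, x2)}) G.maxDegree c x1).Nonempty := by
    rw [← Finset.card_pos]; omega
  -- the shifted coloring φ' (uncoloring x1z)
  have hφ' := shift_proper G G.maxDegree h12 hz hz2 hc hf1
  -- pair (x1, x2)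
  have D12 := noCommonMissing G G.maxDegree hnc h12 hc
  -- pair (x1, z)
  have D1z : Disjoint (missingAt (G.deleteEdges {s(x1, x2)}) G.maxDegree c x1)
      (missingAt (G.deleteEdges {s(x1, x2)}) G.maxDegree c z) := by
    have D' := noCommonMissing G G.maxDegree hnc hz hφ'
    exact Finset.disjoint_left.mpr fun {a} ha1 haz =>
      Finset.disjoint_left.mp D' (shift_missing_u G G.maxDegree h12 hz hz2 ha1)
        (shift_missing_w G G.maxDegree h12 hz hz2 haz)
  -- pair (x2, y)
  have D2y : Disjoint (missingAt (G.deleteEdges {s(x1, x2)}) G.maxDegree c x2)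
      (missingAt (G.deleteEdges {s(x1, x2)}) G.maxDegree c y) := by
    have hc' : IsProperEdgeColoring (G.deleteEdges {s(x2, x1)}) G.maxDegree c := by
      rw [hswap]; exact hc
    have hf2' : c s(x2, y) ∈ missingAt (G.deleteEdges {s(x2, x1)}) G.maxDegree c x1 := by
      rw [hswap]; exact hf2
    have hψ := shift_proper G G.maxDegree h12.symm hy hy1 hc' hf2'
    have D' := noCommonMissing G G.maxDegree hnc hy hψ
    refine Finset.disjoint_left.mpr fun {a} ha2 hay => ?_
    have ha2' : a ∈ missingAt (G.deleteEdges {s(x2, x1)}) G.maxDegree c x2 := by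
      rw [hswap]; exact ha2
    have hay' : a ∈ missingAt (G.deleteEdges {s(x2, x1)}) G.maxDegree c y := by
      rw [hswap]; exact hay
    exact Finset.disjoint_left.mp D' (shift_missing_u G G.maxDegree h12.symm hy hy1 ha2')
      (shift_missing_w G G.maxDegree h12.symm hy hy1 hay')
  -- pair (x1, y)
  have D1y : Disjoint (missingAt (G.deleteEdges {s(x1, x2)}) G.maxDegree c x1)
      (missingAt (G.deleteEdges {s(x1, x2)}) G.maxDegree c y) :=
    Finset.disjoint_left.mpr fun {a} h1 h2 =>
      (lemA G G.maxDegree hnc h12 hy hy1 hc hf2 hM2ne h1 h2).elim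
  -- pair (x2, z)
  have D2z : Disjoint (missingAt (G.deleteEdges {s(x1, x2)}) G.maxDegree c x2)
      (missingAt (G.deleteEdges {s(x1, x2)}) G.maxDegree c z) := by
    refine Finset.disjoint_left.mpr fun {δ} hδ2 hδz => ?_
    obtain ⟨α, hα⟩ := hM1ne
    have hγα : c s(x1, z) ≠ α := fun h => (mem_missingAt.mp hα).2 (h ▸ hγ1)
    have hγδ : c s(x1, z) ≠ δ := fun h => (mem_missingAt.mp hδz).2 (h ▸ hγz)
    have r1 := factB G G.maxDegree hnc h12 hc hα hδ2
    have r2 := factB G G.maxDegree hnc hz hφ'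
      (shift_missing_u G G.maxDegree h12 hz hz2 hα)
      (shift_missing_w G G.maxDegree h12 hz hz2 hδz)
    rw [chainAdj_shift_eq G h12 hz hz2 hγα hγδ] at r2
    exact three_pendant (chain_deg2 hc) h12.ne hz.ne (Ne.symm hz2)
      (chain_pendant hc (mem_missingAt.mp hα).2 (Or.inl rfl))
      (chain_pendant hc (mem_missingAt.mp hδ2).2 (Or.inr rfl))
      (chain_pendant hc (mem_missingAt.mp hδz).2 (Or.inr rfl))
      r1 r2
  -- pair (y, z)
  have Dyz : Disjoint (missingAt (G.deleteEdges {s(x1, x2)}) G.maxDegree c y)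
      (missingAt (G.deleteEdges {s(x1, x2)}) G.maxDegree c z) := by
    refine Finset.disjoint_left.mpr fun {δ} hδy hδz => ?_
    -- δ is not missing at x1
    have hδ1 : δ ∉ missingAt (G.deleteEdges {s(x1, x2)}) G.maxDegree c x1 :=
      fun h => lemA G G.maxDegree hnc h12 hy hy1 hc hf2 hM2ne h hδy
    -- pick α missing at x1 different from τ = c s(x2,y)
    have hsdne : (missingAt (G.deleteEdges {s(x1, x2)}) G.maxDegree c x1 \
        {c s(x2, y)}).Nonempty := by
      rw [← Finset.card_pos]
      have hle := Finset.le_card_sdiff ({c s(x2, y)} : Finset ℕ)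
        (missingAt (G.deleteEdges {s(x1, x2)}) G.maxDegree c x1)
      rw [Finset.card_singleton] at hle
      omega
    obtain ⟨α, hαmem⟩ := hsdne
    rw [Finset.mem_sdiff, Finset.mem_singleton] at hαmem
    obtain ⟨hα, hατ⟩ := hαmem
    have hαδ : α ≠ δ := fun h => hδ1 (h ▸ hα)
    have hγα : c s(x1, z) ≠ α := fun h => (mem_missingAt.mp hα).2 (h ▸ hγ1)
    have hγδ : c s(x1, z) ≠ δ := fun h => (mem_missingAt.mp hδz).2 (h ▸ hγz)
    have hτδ : c s(x2, y) ≠ δ := fun h => (mem_missingAt.mp hδy).2 (h ▸ hτy)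
    -- z is reachable from x1 in the (α, δ)-chain graph
    have r_z := factB G G.maxDegree hnc hz hφ'
      (shift_missing_u G G.maxDegree h12 hz hz2 hα)
      (shift_missing_w G G.maxDegree h12 hz hz2 hδz)
    rw [chainAdj_shift_eq G h12 hz hz2 hγα hγδ] at r_z
    -- y is not reachable from x1 in this chain graph
    have hyr : ¬ (chainAdj (G.deleteEdges {s(x1, x2)}) c α δ).Reachable x1 y := by
      intro r
      exact three_pendant (chain_deg2 hc) hz.ne (Ne.symm hy1) (Ne.symm hyz)
        (chain_pendant hc (mem_missingAt.mp hα).2 (Or.inl rfl))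
        (chain_pendant hc (mem_missingAt.mp hδz).2 (Or.inr rfl))
        (chain_pendant hc (mem_missingAt.mp hδy).2 (Or.inr rfl))
        r_z r
    -- swap the (α, δ)-chain component of x1
    have hc₂ := swap_proper hc (mem_missingAt.mp hα).1 (mem_missingAt.mp hδy).1 hαδ x1
    have hval : swapColor (G.deleteEdges {s(x1, x2)}) c α δ x1 s(x2, y) = c s(x2, y) := by
      have hn : ¬((c s(x2, y) = α ∨ c s(x2, y) = δ) ∧
          (chainAdj (G.deleteEdges {s(x1, x2)}) c α δ).Reachable x1 x2) := by
        rintro ⟨h | h, -⟩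
        · exact hατ h.symm
        · exact hτδ h
      rw [swap_eq had2y, if_neg hn]
    have hτ₂ : c s(x2, y) ∈ missingAt (G.deleteEdges {s(x1, x2)}) G.maxDegree
        (swapColor (G.deleteEdges {s(x1, x2)}) c α δ x1) x1 := by
      rw [mem_missingAt]
      refine ⟨(mem_missingAt.mp hf2).1, fun hmem => ?_⟩
      exact (mem_missingAt.mp hf2).2
        ((swap_colorsAt_of_ne (fun h => hατ h.symm) hτδ).mp hmem)
    have hδ₂1 : δ ∈ missingAt (G.deleteEdges {s(x1, x2)}) G.maxDegree
        (swapColor (G.deleteEdges {s(x1, x2)}) c α δ x1) x1 := by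
      rw [mem_missingAt]
      refine ⟨(mem_missingAt.mp hδy).1, fun hmem => ?_⟩
      exact (mem_missingAt.mp hα).2
        ((swap_colorsAt_beta hαδ (SimpleGraph.Reachable.refl x1)).mp hmem)
    have hδ₂y : δ ∈ missingAt (G.deleteEdges {s(x1, x2)}) G.maxDegree
        (swapColor (G.deleteEdges {s(x1, x2)}) c α δ x1) y := by
      rw [mem_missingAt]
      refine ⟨(mem_missingAt.mp hδy).1, ?_⟩
      rw [swap_colorsAt_of_not_reach hyr]
      exact (mem_missingAt.mp hδy).2
    have hM2ne₂ : (missingAt (G.deleteEdges {s(x1, x2)}) G.maxDegree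
        (swapColor (G.deleteEdges {s(x1, x2)}) c α δ x1) x2).Nonempty := by
      have h := missingAt_card_ge G G.maxDegree h12.symm
        (swapColor (G.deleteEdges {s(x1, x2)}) c α δ x1)
      rw [hswap] at h
      rw [← Finset.card_pos]
      omega
    exact lemA G G.maxDegree hnc h12 hy hy1 hc₂ (by rw [hval]; exact hτ₂) hM2ne₂ hδ₂1 hδ₂y
  -- assemble
  unfold Elementary Set.Pairwise
  intro a ha b hb hab
  simp only [Finset.coe_insert, Set.mem_insert_iff, Finset.coe_singleton,
    Set.mem_singleton_iff] at ha hb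
  rcases ha with rfl | rfl | rfl | rfl <;> rcases hb with rfl | rfl | rfl | rfl <;>
    first
      | exact absurd rfl hab
      | exact D12 | exact D12.symm
      | exact D1y | exact D1y.symm
      | exact D1z | exact D1z.symm
      | exact D2y | exact D2y.symm
      | exact D2z | exact D2z.symm
      | exact Dyz | exact Dyz.symm
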